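/- For 1 ≤ i ≤ m-1, the operator δ_i = (h - i - 1)x^i in A_{1,x} maps A(m) into A(m), and moreover for any polynomial f ∈ K[h], the operator f(h)x^i maps A(m) into A(m) if and only if f is divisible by h - i - 1. -/

import Mathlib

open Polynomial LaurentPolynomial

/-- The operator `f(h)x^a` of the skew Laurent ring `K[h][x,x⁻¹;σ]`, `σ(h) = h-1`,
acting on `K[x,x⁻¹]` by `(f(h)x^a) ∗ x^j = f(a+j+1) x^{a+j}`
(so that `h ∗ x^j = (j+1) x^j` and `x^{±1} ∗ x^j = x^{j±1}`). -/
noncomputable def op (K : Type*) [Field K] (f : Polynomial K) (a : ℤ) :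
    LaurentPolynomial K →ₗ[K] LaurentPolynomial K :=
  (Finsupp.lsum K fun j : ℤ =>
    f.eval ((a + j + 1 : ℤ) : K) •
      LinearMap.toSpanSingleton K (LaurentPolynomial K) (LaurentPolynomial.T (a + j))) ∘ₗ
    (AddMonoidAlgebra.coeffLinearEquiv K).toLinearMap

/-- `A(m) = K + Σ_{i ≥ m} K x^i`, as a subspace of `K[x,x⁻¹]`. -/
noncomputable def Am (K : Type*) [Field K] (m : ℕ) : Submodule K (LaurentPolynomial K) :=
  Submodule.span K {p : LaurentPolynomial K | ∃ i : ℤ, (i = 0 ∨ (m : ℤ) ≤ i) ∧ p = T i}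

lemma op_T (K : Type*) [Field K] (f : Polynomial K) (a j : ℤ) :
    op K f a (T j) = f.eval ((a + j + 1 : ℤ) : K) • T (a + j) := by
  have hT : AddMonoidAlgebra.coeffLinearEquiv K (T j : LaurentPolynomial K) =
      Finsupp.single j 1 := rfl
  rw [op, LinearMap.comp_apply, LinearEquiv.coe_coe, hT]
  erw [Finsupp.lsum_single]
  simp [LinearMap.toSpanSingleton_apply]

lemma T_mem_Am (K : Type*) [Field K] (m : ℕ) {j : ℤ} (hj : j = 0 ∨ (m : ℤ) ≤ j) :
    T j ∈ Am K m :=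
  Submodule.subset_span ⟨j, hj, rfl⟩

lemma coeff_eq_zero_of_mem_Am (K : Type*) [Field K] (m : ℕ) {k : ℤ}
    (hk : k ≠ 0) (hk2 : ¬ (m : ℤ) ≤ k) {p : LaurentPolynomial K} (hp : p ∈ Am K m) :
    p.coeff k = 0 := by
  have : Am K m ≤ LinearMap.ker ((Finsupp.lapply (M := K) k) ∘ₗ
      (AddMonoidAlgebra.coeffLinearEquiv K).toLinearMap) := by
    rw [Am, Submodule.span_le]
    rintro q ⟨j, hj, rfl⟩
    have hjk : j ≠ k := by rintro rfl; rcases hj with h | h; exacts [hk h, hk2 h]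
    simp only [SetLike.mem_coe, LinearMap.mem_ker]
    show (T j : LaurentPolynomial K).coeff k = 0
    rw [T_apply, if_neg hjk]
  exact this hp

/-- for `1 ≤ i ≤ m-1` the operator `δ_i = (h-i-1)x^i` maps `A(m)` into
`A(m)`, and for `f ∈ K[h]`, the operator `f(h)x^i` maps `A(m)` into `A(m)` if and
only if `h - i - 1` divides `f`. -/
theorem stmt3 (K : Type*) [Field K] [CharZero K] (m : ℕ) (hm : 2 ≤ m)
    (i : ℕ) (h1 : 1 ≤ i) (h2 : i ≤ m - 1) :
    Submodule.map (op K (X - Polynomial.C ((i : K) + 1)) (i : ℤ)) (Am K m) ≤ Am K m ∧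
      ∀ f : Polynomial K,
        (Submodule.map (op K f (i : ℤ)) (Am K m) ≤ Am K m ↔
          (X - Polynomial.C ((i : K) + 1)) ∣ f) := by
  have hilt : (i : ℤ) < m := by
    have : i < m := lt_of_le_of_lt h2 (Nat.sub_lt (by omega) one_pos)
    exact_mod_cast this
  have key : ∀ f : Polynomial K, (X - Polynomial.C ((i : K) + 1)) ∣ f →
      Submodule.map (op K f (i : ℤ)) (Am K m) ≤ Am K m := by
    intro f hf
    rw [Submodule.map_le_iff_le_comap, Am, Submodule.span_le]
    rintro q ⟨j, hj, rfl⟩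
    simp only [SetLike.mem_coe, Submodule.mem_comap, op_T]
    rcases hj with rfl | hjm
    · have : f.eval (((i : ℤ) + 0 + 1 : ℤ) : K) = 0 := by
        have hroot : f.eval ((i : K) + 1) = 0 := by
          obtain ⟨g, rfl⟩ := hf
          simp
        convert hroot using 2
        push_cast; ring
      rw [this, zero_smul]
      exact Submodule.zero_mem _
    · exact Submodule.smul_mem _ _ (T_mem_Am K m (Or.inr (by omega)))
  have fwd : ∀ f : Polynomial K, Submodule.map (op K f (i : ℤ)) (Am K m) ≤ Am K m →
      (X - Polynomial.C ((i : K) + 1)) ∣ f := by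
    intro f hmap
    have h0 : T (0 : ℤ) ∈ Am K m := T_mem_Am K m (Or.inl rfl)
    have himg : op K f (i : ℤ) (T 0) ∈ Am K m := hmap ⟨T 0, h0, rfl⟩
    rw [op_T] at himg
    have hcoef : (f.eval (((i : ℤ) + 0 + 1 : ℤ) : K) • T ((i : ℤ) + 0) : LaurentPolynomial K).coeff
        ((i : ℤ) + 0) = 0 :=
      coeff_eq_zero_of_mem_Am K m
        (by
          have : (1:ℤ) ≤ i := by exact_mod_cast h1
          omega) (by omega) himg
    have : f.eval (((i : ℤ) + 0 + 1 : ℤ) : K) = 0 := by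
      have hr : (f.eval (((i : ℤ) + 0 + 1 : ℤ) : K) • T ((i : ℤ) + 0) : LaurentPolynomial K).coeff
          ((i : ℤ) + 0) = f.eval (((i : ℤ) + 0 + 1 : ℤ) : K) *
            (T ((i : ℤ) + 0) : LaurentPolynomial K).coeff ((i : ℤ) + 0) := rfl
      rw [hr, T_apply, if_pos rfl, mul_one] at hcoef
      exact hcoef
    have hroot : f.eval ((i : K) + 1) = 0 := by
      convert this using 2; push_cast; ring
    have := (dvd_iff_isRoot (p := f) (a := (i : K) + 1)).2 hroot
    exact this
  refine ⟨key _ (dvd_refl _), fun f => ⟨fwd f, key f⟩⟩
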